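/- The number of compositions of n with c_{2i-1} > t·c_{2i} for every valid i (i.e., a_{1,t}(n)) equals the number of compositions of n into parts congruent to 1 modulo t+1, and satisfies a_{1,t}(n) = a_{1,t}(n−1) + a_{1,t}(n−t−1) for n > t+1. -/
import Mathlib


/-- `l` is a composition of `n`: a list of positive integers summing to `n`. -/
def IsComposition (n : ℕ) (l : List ℕ) : Prop := (∀ x ∈ l, 0 < x) ∧ l.sum = n

/-- The scaled Arndt condition: `s * c_{2i-1} > t * c_{2i}` for each pair
(0-indexed: `s * l[2i] > t * l[2i+1]`). -/
def ArndtCond (s t : ℕ) (l : List ℕ) : Prop :=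
  ∀ i : ℕ, 2 * i + 1 < l.length → t * l[2 * i + 1]! < s * l[2 * i]!

/-- `a_{s,t}(n)`: the number of scaled Arndt compositions of `n`. -/
noncomputable def arndtCount (s t n : ℕ) : ℕ :=
  Nat.card {l : List ℕ // IsComposition n l ∧ ArndtCond s t l}

/-- Number of compositions of `n` with all parts in the set `A`. -/
noncomputable def compCount (A : Set ℕ) (n : ℕ) : ℕ :=
  Nat.card {l : List ℕ // IsComposition n l ∧ ∀ x ∈ l, x ∈ A}

lemma arndtCond_nil (s t : ℕ) : ArndtCond s t [] := by
  intro i h; simp at h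

lemma arndtCond_singleton (s t a : ℕ) : ArndtCond s t [a] := by
  intro i h; simp at h

lemma arndtCond_cons_cons {s t a b : ℕ} {r : List ℕ} :
    ArndtCond s t (a :: b :: r) ↔ t * b < s * a ∧ ArndtCond s t r := by
  constructor
  · intro h
    refine ⟨by simpa using h 0 (by simp), fun i hi => ?_⟩
    have h2 := h (i + 1) (by simp only [List.length_cons]; omega)
    have e1 : 2 * (i + 1) + 1 = (2 * i + 1) + 1 + 1 := by ring
    have e2 : 2 * (i + 1) = (2 * i) + 1 + 1 := by ring
    rw [e1, e2, List.getElem!_cons_succ, List.getElem!_cons_succ,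
      List.getElem!_cons_succ, List.getElem!_cons_succ] at h2
    exact h2
  · rintro ⟨h1, h2⟩ i hi
    cases i with
    | zero => simpa using h1
    | succ i =>
      have e1 : 2 * (i + 1) + 1 = (2 * i + 1) + 1 + 1 := by ring
      have e2 : 2 * (i + 1) = (2 * i) + 1 + 1 := by ring
      rw [e1, e2, List.getElem!_cons_succ, List.getElem!_cons_succ,
        List.getElem!_cons_succ, List.getElem!_cons_succ]
      exact h2 i (by simp only [List.length_cons] at hi; omega)

lemma isComposition_zero {l : List ℕ} (h : IsComposition 0 l) : l = [] := by
  rcases h with ⟨hpos, hsum⟩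
  cases l with
  | nil => rfl
  | cons a r =>
    have := hpos a (by simp)
    simp [List.sum_cons] at hsum
    omega

lemma comps_finite (n : ℕ) : {l : List ℕ | IsComposition n l}.Finite := by
  induction n using Nat.strong_induction_on with
  | _ n ih =>
    cases n with
    | zero =>
      exact (Set.finite_singleton ([] : List ℕ)).subset fun l hl => isComposition_zero hl
    | succ m =>
      have hsub : {l : List ℕ | IsComposition (m+1) l} ⊆
          ⋃ a ∈ Finset.Icc 1 (m+1), (a :: ·) '' {l : List ℕ | IsComposition (m+1-a) l} := by
        rintro l ⟨hpos, hsum⟩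
        cases l with
        | nil => simp at hsum
        | cons a r =>
          have ha : 0 < a := hpos a (by simp)
          have hsum' : a + r.sum = m + 1 := by simpa using hsum
          have hmem : a ∈ (Finset.Icc 1 (m+1) : Finset ℕ) := by
            simp only [Finset.mem_Icc]; omega
          exact Set.mem_biUnion hmem ⟨r, ⟨fun x hx => hpos x (by simp [hx]), by omega⟩, rfl⟩
      refine Set.Finite.subset ?_ hsub
      refine Set.Finite.biUnion (Finset.finite_toSet _) ?_
      intro a ha
      simp only [Finset.coe_Icc, Set.mem_Icc] at ha
      exact (ih (m+1-a) (by omega)).image _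

def ArSet (t n : ℕ) : Set (List ℕ) := {l | IsComposition n l ∧ ArndtCond 1 t l}

def BSet (t n : ℕ) : Set (List ℕ) := {l | IsComposition n l ∧ ∀ x ∈ l, x % (t+1) = 1}

lemma ArSet_finite (t n : ℕ) : (ArSet t n).Finite :=
  (comps_finite n).subset fun _ hl => hl.1

lemma BSet_finite (t n : ℕ) : (BSet t n).Finite :=
  (comps_finite n).subset fun _ hl => hl.1

lemma arndtCount_eq_ncard (t n : ℕ) : arndtCount 1 t n = (ArSet t n).ncard := by
  rw [← Nat.card_coe_set_eq]; rfl

lemma compCount_eq_ncard (t n : ℕ) :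
    compCount {x : ℕ | x % (t+1) = 1} n = (BSet t n).ncard := by
  rw [← Nat.card_coe_set_eq]; rfl

lemma ArSet_zero (t : ℕ) : ArSet t 0 = {[]} := by
  ext l
  simp only [Set.mem_singleton_iff]
  constructor
  · intro hl; exact isComposition_zero hl.1
  · rintro rfl; exact ⟨⟨by simp, by simp⟩, arndtCond_nil _ _⟩

lemma BSet_zero (t : ℕ) : BSet t 0 = {[]} := by
  ext l
  simp only [Set.mem_singleton_iff]
  constructor
  · intro hl; exact isComposition_zero hl.1
  · rintro rfl; exact ⟨⟨by simp, by simp⟩, by simp⟩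

lemma ArSet_small {t n : ℕ} (ht : 0 < t) (h1 : 0 < n) (h2 : n ≤ t + 1) :
    ArSet t n = {[n]} := by
  ext l
  simp only [Set.mem_singleton_iff]
  constructor
  · rintro ⟨⟨hpos, hsum⟩, harndt⟩
    match l with
    | [] => simp at hsum; omega
    | [a] => simp at hsum; rw [hsum]
    | a :: b :: r =>
      exfalso
      have hb : 0 < b := hpos b (by simp)
      have hab : t * b < 1 * a := (arndtCond_cons_cons.mp harndt).1
      have htb : t * 1 ≤ t * b := Nat.mul_le_mul_left t hb
      have hs : a + (b + r.sum) = n := by simpa using hsum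
      simp only [one_mul, mul_one] at hab htb
      omega
  · rintro rfl
    exact ⟨⟨by intro x hx; simp at hx; omega, by simp⟩, arndtCond_singleton _ _ _⟩

lemma BSet_small {t n : ℕ} (ht : 0 < t) (h2 : n ≤ t + 1) :
    BSet t n = {List.replicate n 1} := by
  ext l
  simp only [Set.mem_singleton_iff]
  constructor
  · rintro ⟨⟨hpos, hsum⟩, hmod⟩
    have hall : ∀ x ∈ l, x = 1 := by
      intro x hx
      have hx1 := hpos x hx
      have hx2 : x ≤ n := hsum ▸ List.single_le_sum (fun y _ => Nat.zero_le y) x hx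
      have hx3 := hmod x hx
      rcases Nat.lt_or_ge x (t+1) with h | h
      · rwa [Nat.mod_eq_of_lt h] at hx3
      · have hxe : x = t + 1 := by omega
        rw [hxe, Nat.mod_self] at hx3; omega
    have hrep : l = List.replicate l.length 1 := List.eq_replicate_iff.mpr ⟨rfl, hall⟩
    have hlen : l.length = n := by
      have h' := hsum
      rw [hrep, List.sum_replicate, smul_eq_mul, mul_one] at h'
      simpa using h'
    rw [hrep, hlen]
  · rintro rfl
    refine ⟨⟨?_, by simp [List.sum_replicate]⟩, ?_⟩
    · intro x hx
      rw [List.eq_of_mem_replicate hx]; omega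
    · intro x hx
      rw [List.eq_of_mem_replicate hx]
      exact Nat.mod_eq_of_lt (by omega)

def hmap (t : ℕ) : List ℕ → List ℕ
  | [] => []
  | a :: r => (a + (t+1)) :: r

lemma BSet_rec {t n : ℕ} (ht : 0 < t) (hn : t + 1 < n) :
    (BSet t n).ncard = (BSet t (n-1)).ncard + (BSet t (n - (t+1))).ncard := by
  have key : BSet t n = (fun l => 1 :: l) '' BSet t (n-1) ∪ hmap t '' BSet t (n-(t+1)) := by
    ext l
    constructor
    · rintro ⟨⟨hpos, hsum⟩, hmod⟩
      match l with
      | [] => exfalso; simp at hsum; omega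
      | a :: r =>
        have ha := hpos a (by simp)
        have hma := hmod a (by simp)
        have hsum' : a + r.sum = n := by simpa using hsum
        rcases eq_or_ne a 1 with rfl | hne
        · left
          exact ⟨r, ⟨⟨fun x hx => hpos x (by simp [hx]), by omega⟩,
            fun x hx => hmod x (by simp [hx])⟩, rfl⟩
        · right
          have ha2 : t + 1 < a := by
            rcases Nat.lt_or_ge a (t+1) with h | h
            · rw [Nat.mod_eq_of_lt h] at hma; omega
            · rcases Nat.lt_or_ge (t+1) a with h' | h'
              · exact h'
              · have : a = t + 1 := by omega
                rw [this, Nat.mod_self] at hma; omega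
          refine ⟨(a - (t+1)) :: r, ⟨⟨?_, ?_⟩, ?_⟩, ?_⟩
          · intro x hx
            rcases List.mem_cons.mp hx with rfl | hx
            · omega
            · exact hpos x (by simp [hx])
          · simp only [List.sum_cons]; omega
          · intro x hx
            rcases List.mem_cons.mp hx with rfl | hx
            · have he : a - (t+1) + (t+1) = a := by omega
              calc (a - (t+1)) % (t+1) = (a - (t+1) + (t+1)) % (t+1) :=
                    (Nat.add_mod_right _ _).symm
                _ = 1 := by rw [he]; exact hma
            · exact hmod x (by simp [hx])
          · show (a - (t+1) + (t+1)) :: r = a :: r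
            congr 1; omega
    · rintro (⟨r, ⟨⟨hpos, hsum⟩, hmod⟩, rfl⟩ | ⟨d, ⟨⟨hpos, hsum⟩, hmod⟩, rfl⟩)
      · refine ⟨⟨?_, ?_⟩, ?_⟩
        · intro x hx
          rcases List.mem_cons.mp hx with rfl | hx
          · omega
          · exact hpos x hx
        · simp only [List.sum_cons]; omega
        · intro x hx
          rcases List.mem_cons.mp hx with rfl | hx
          · exact Nat.mod_eq_of_lt (by omega)
          · exact hmod x hx
      · match d with
        | [] => exfalso; simp at hsum; omega
        | a :: r =>
          have hsum' : a + r.sum = n - (t+1) := by simpa using hsum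
          refine ⟨⟨?_, ?_⟩, ?_⟩
          · intro x hx
            rcases List.mem_cons.mp hx with rfl | hx
            · omega
            · exact hpos x (by simp [hx])
          · show a + (t+1) + r.sum = n
            omega
          · intro x hx
            rcases List.mem_cons.mp hx with rfl | hx
            · rw [Nat.add_mod_right]
              exact hmod a (by simp)
            · exact hmod x (by simp [hx])
  have hdisj : Disjoint ((fun l => 1 :: l) '' BSet t (n-1)) (hmap t '' BSet t (n-(t+1))) := by
    rw [Set.disjoint_left]
    rintro l ⟨r, _, rfl⟩ ⟨d, ⟨⟨_, hsum⟩, _⟩, heq⟩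
    match d with
    | [] => simp at hsum; omega
    | a :: r' =>
      have : a + (t+1) = 1 := (List.cons.injEq _ _ _ _ ▸ heq).1
      omega
  have hinj1 : Set.InjOn (fun l => 1 :: l) (BSet t (n-1)) := fun l1 _ l2 _ h => by
    simpa using h
  have hinj2 : Set.InjOn (hmap t) (BSet t (n-(t+1))) := by
    rintro l1 ⟨⟨_, hs1⟩, _⟩ l2 ⟨⟨_, hs2⟩, _⟩ heq
    match l1, l2 with
    | [], _ => exfalso; simp at hs1; omega
    | _ :: _, [] => exfalso; simp at hs2; omega
    | a :: r, a' :: r' =>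
      have h1 : a + (t+1) = a' + (t+1) := (List.cons.injEq _ _ _ _ ▸ heq).1
      have h2 : r = r' := (List.cons.injEq _ _ _ _ ▸ heq).2
      rw [h2]; congr 1; omega
  rw [key, Set.ncard_union_eq hdisj ((BSet_finite t (n-1)).image _)
      ((BSet_finite t (n-(t+1))).image _),
    Set.ncard_image_of_injOn hinj1, Set.ncard_image_of_injOn hinj2]

def fmap : List ℕ → List ℕ
  | [] => []
  | a :: r => (a + 1) :: r

def gmap (t : ℕ) : List ℕ → List ℕ
  | [] => []
  | [a] => if a = 1 then [t+1, 1] else [t+1, 1, a-1]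
  | a :: b :: r => if a = t * b + 1 then (a + t) :: (b + 1) :: r
      else (t+1) :: 1 :: (a-1) :: b :: r

lemma gmap_shape {t m : ℕ} (hm : 0 < m) {d : List ℕ} (hd : d ∈ ArSet t m) :
    ∃ x y rest, gmap t d = x :: y :: rest ∧ x = t * y + 1 := by
  obtain ⟨⟨hpos, hsum⟩, _⟩ := hd
  match d with
  | [] => exfalso; simp at hsum; omega
  | [a] =>
    by_cases h : a = 1
    · exact ⟨t+1, 1, [], by simp [gmap, h], by ring⟩
    · exact ⟨t+1, 1, [a-1], by simp [gmap, h], by ring⟩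
  | a :: b :: r =>
    by_cases h : a = t * b + 1
    · refine ⟨a + t, b + 1, r, by simp [gmap, h], ?_⟩
      have : t * (b+1) = t * b + t := by ring
      omega
    · exact ⟨t+1, 1, (a-1) :: b :: r, by simp [gmap, h], by ring⟩

lemma ArSet_rec {t n : ℕ} (ht : 0 < t) (hn : t + 1 < n) :
    (ArSet t n).ncard = (ArSet t (n-1)).ncard + (ArSet t (n - (t+1))).ncard := by
  have key : ArSet t n = fmap '' ArSet t (n-1) ∪ gmap t '' ArSet t (n-(t+1)) := by
    ext l
    constructor
    · rintro ⟨⟨hpos, hsum⟩, harndt⟩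
      match l with
      | [] => exfalso; simp at hsum; omega
      | [a] =>
        left
        have han : a = n := by simpa using hsum
        refine ⟨[n-1], ⟨⟨?_, by simp⟩, arndtCond_singleton _ _ _⟩, ?_⟩
        · intro x hx; simp at hx; omega
        · show (n - 1 + 1) :: [] = [a]
          rw [han]; congr 1; omega
      | a :: b :: r =>
        have hb : 0 < b := hpos b (by simp)
        obtain ⟨hab, hrest⟩ := arndtCond_cons_cons.mp harndt
        have htb : t * 1 ≤ t * b := Nat.mul_le_mul_left t hb
        simp only [one_mul, mul_one] at hab htb
        have hsum' : a + (b + r.sum) = n := by simpa using hsum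
        by_cases hcrit : a = t * b + 1
        · -- boundary case: comes from gmap
          right
          rcases Nat.lt_or_ge 1 b with hb2 | hb1
          · -- b ≥ 2
            refine ⟨(a - t) :: (b - 1) :: r, ⟨⟨?_, ?_⟩, ?_⟩, ?_⟩
            · intro x hx
              rcases List.mem_cons.mp hx with rfl | hx
              · omega
              · rcases List.mem_cons.mp hx with rfl | hx
                · omega
                · exact hpos x (by simp [hx])
            · simp only [List.sum_cons]; omega
            · refine arndtCond_cons_cons.mpr ⟨?_, hrest⟩
              have : t * (b - 1) + t = t * b := by
                rw [← Nat.mul_succ]; congr 1; omega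
              omega
            · show gmap t ((a - t) :: (b - 1) :: r) = a :: b :: r
              have hat : a - t = t * (b-1) + 1 := by
                have : t * (b - 1) + t = t * b := by
                  rw [← Nat.mul_succ]; congr 1; omega
                omega
              rw [gmap, if_pos hat]
              have h1 : a - t + t = a := by omega
              have h2 : b - 1 + 1 = b := by omega
              rw [h1, h2]
          · -- b = 1, a = t + 1
            have hb1' : b = 1 := by omega
            subst hb1'
            have ha1 : a = t + 1 := by omega
            subst ha1
            match r with
            | [] =>
              refine ⟨[1], ⟨⟨by simp, ?_⟩, arndtCond_singleton _ _ _⟩, ?_⟩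
              · simp only [List.sum_cons, List.sum_nil] at hsum' ⊢; omega
              · rw [gmap, if_pos rfl]
            | [c] =>
              have hc : 0 < c := hpos c (by simp)
              refine ⟨[c+1], ⟨⟨by simp, ?_⟩, arndtCond_singleton _ _ _⟩, ?_⟩
              · simp only [List.sum_cons, List.sum_nil] at hsum' ⊢; omega
              · rw [gmap, if_neg (by omega)]
                have : c + 1 - 1 = c := by omega
                rw [this]
            | c :: e :: r2 =>
              have hc : 0 < c := hpos c (by simp)
              have he : 0 < e := hpos e (by simp [List.mem_cons])
              obtain ⟨hce, hrest2⟩ := arndtCond_cons_cons.mp hrest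
              simp only [one_mul] at hce
              refine ⟨(c+1) :: e :: r2, ⟨⟨?_, ?_⟩, ?_⟩, ?_⟩
              · intro x hx
                rcases List.mem_cons.mp hx with rfl | hx
                · omega
                · exact hpos x (by simp [List.mem_cons] at hx ⊢; tauto)
              · simp only [List.sum_cons] at hsum' ⊢; omega
              · exact arndtCond_cons_cons.mpr ⟨by omega, hrest2⟩
              · rw [gmap, if_neg (by omega)]
                have : c + 1 - 1 = c := by omega
                rw [this]
        · -- a ≥ t*b + 2 : comes from fmap
          left
          refine ⟨(a-1) :: b :: r, ⟨⟨?_, ?_⟩, ?_⟩, ?_⟩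
          · intro x hx
            rcases List.mem_cons.mp hx with rfl | hx
            · omega
            · rcases List.mem_cons.mp hx with rfl | hx
              · omega
              · exact hpos x (by simp [hx])
          · simp only [List.sum_cons]; omega
          · exact arndtCond_cons_cons.mpr ⟨by omega, hrest⟩
          · show (a - 1 + 1) :: b :: r = a :: b :: r
            congr 1; omega
    · rintro (⟨d, ⟨⟨hpos, hsum⟩, ha⟩, rfl⟩ | ⟨d, ⟨⟨hpos, hsum⟩, ha⟩, rfl⟩)
      · -- fmap image
        match d with
        | [] => exfalso; simp at hsum; omega
        | a :: r =>
          have hsum' : a + r.sum = n - 1 := by simpa using hsum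
          refine ⟨⟨?_, ?_⟩, ?_⟩
          · intro x hx
            rcases List.mem_cons.mp hx with rfl | hx
            · omega
            · exact hpos x (by simp [hx])
          · show a + 1 + r.sum = n
            omega
          · show ArndtCond 1 t ((a+1) :: r)
            match r with
            | [] => exact arndtCond_singleton _ _ _
            | b :: r2 =>
              obtain ⟨hab, hrest⟩ := arndtCond_cons_cons.mp ha
              exact arndtCond_cons_cons.mpr ⟨by omega, hrest⟩
      · -- gmap image
        match d with
        | [] => exfalso; simp at hsum; omega
        | [a] =>
          have ha1 : 0 < a := hpos a (by simp)
          have hsum' : a = n - (t+1) := by simpa using hsum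
          by_cases h : a = 1
          · rw [gmap, if_pos h]
            refine ⟨⟨by intro x hx; simp at hx; omega, ?_⟩, ?_⟩
            · simp only [List.sum_cons, List.sum_nil]; omega
            · exact arndtCond_cons_cons.mpr ⟨by omega, arndtCond_nil _ _⟩
          · rw [gmap, if_neg h]
            refine ⟨⟨?_, ?_⟩, ?_⟩
            · intro x hx; simp at hx
              rcases hx with rfl | rfl | rfl <;> omega
            · simp only [List.sum_cons, List.sum_nil]; omega
            · exact arndtCond_cons_cons.mpr ⟨by omega, arndtCond_singleton _ _ _⟩
        | a :: b :: r =>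
          have ha1 : 0 < a := hpos a (by simp)
          have hb : 0 < b := hpos b (by simp)
          obtain ⟨hab, hrest⟩ := arndtCond_cons_cons.mp ha
          have htb : t * 1 ≤ t * b := Nat.mul_le_mul_left t hb
          simp only [one_mul, mul_one] at hab htb
          have hsum' : a + (b + r.sum) = n - (t+1) := by simpa using hsum
          by_cases h : a = t * b + 1
          · rw [gmap, if_pos h]
            refine ⟨⟨?_, ?_⟩, ?_⟩
            · intro x hx
              rcases List.mem_cons.mp hx with rfl | hx
              · omega
              · rcases List.mem_cons.mp hx with rfl | hx
                · omega
                · exact hpos x (by simp [hx])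
            · simp only [List.sum_cons]; omega
            · refine arndtCond_cons_cons.mpr ⟨?_, hrest⟩
              have : t * (b + 1) = t * b + t := by ring
              omega
          · rw [gmap, if_neg h]
            refine ⟨⟨?_, ?_⟩, ?_⟩
            · intro x hx
              simp only [List.mem_cons] at hx
              rcases hx with rfl | rfl | rfl | rfl | hx
              · omega
              · omega
              · omega
              · omega
              · exact hpos x (by simp [hx])
            · simp only [List.sum_cons]; omega
            · refine arndtCond_cons_cons.mpr ⟨by omega, ?_⟩
              exact arndtCond_cons_cons.mpr ⟨by omega, hrest⟩
  have hdisj : Disjoint (fmap '' ArSet t (n-1)) (gmap t '' ArSet t (n-(t+1))) := by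
    rw [Set.disjoint_left]
    rintro l ⟨d, hd, rfl⟩ ⟨d', hd', heq⟩
    obtain ⟨x, y, rest, hgs, hxy⟩ := gmap_shape (by omega) hd'
    rw [hgs] at heq
    obtain ⟨⟨hpos, hsum⟩, ha⟩ := hd
    match d with
    | [] => exfalso; simp at hsum; omega
    | [a] =>
      -- fmap d = [a+1], a two-elt list can't equal it
      exact absurd heq.symm (by simp [fmap])
    | a :: b :: r =>
      have hb : 0 < b := hpos b (by simp)
      obtain ⟨hab, -⟩ := arndtCond_cons_cons.mp ha
      simp only [one_mul] at hab
      simp only [fmap] at heq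
      injection heq with e1 heq2
      injection heq2 with e2 heq3
      subst e2
      omega
  have hinj1 : Set.InjOn fmap (ArSet t (n-1)) := by
    rintro l1 ⟨⟨_, hs1⟩, _⟩ l2 ⟨⟨_, hs2⟩, _⟩ heq
    match l1, l2 with
    | [], _ => exfalso; simp at hs1; omega
    | _ :: _, [] => exfalso; simp at hs2; omega
    | a :: r, a' :: r' =>
      simp only [fmap] at heq
      injection heq with e1 e2
      rw [e2]
      congr 1
      omega
  have hinj2 : Set.InjOn (gmap t) (ArSet t (n-(t+1))) := by
    rintro l1 ⟨⟨hp1, hs1⟩, _⟩ l2 ⟨⟨hp2, hs2⟩, _⟩ heq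
    match l1, l2 with
    | [], _ => exfalso; simp at hs1; omega
    | _ :: _, [] => exfalso; simp at hs2; omega
    | [a], [a'] =>
      have ha := hp1 a (by simp)
      have ha' := hp2 a' (by simp)
      simp only [gmap] at heq
      split_ifs at heq with h1 h2 h2
      · rw [h1, h2]
      · injection heq with e1 heq2
        injection heq2 with e2 heq3
        exact absurd heq3 (by simp)
      · injection heq with e1 heq2
        injection heq2 with e2 heq3
        exact absurd heq3 (by simp)
      · injection heq with e1 heq2
        injection heq2 with e2 heq3
        injection heq3 with e3 heq4
        have : a = a' := by omega
        rw [this]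
    | [a], a' :: b' :: r' =>
      exfalso
      have hb' := hp2 b' (by simp)
      simp only [gmap] at heq
      split_ifs at heq with h1 h2 h2
      · injection heq with e1 heq2
        injection heq2 with e2 heq3
        omega
      · injection heq with e1 heq2
        injection heq2 with e2 heq3
        exact absurd heq3 (by simp)
      · injection heq with e1 heq2
        injection heq2 with e2 heq3
        omega
      · injection heq with e1 heq2
        injection heq2 with e2 heq3
        injection heq3 with e3 heq4
        exact absurd heq4 (by simp)
    | a :: b :: r, [a'] =>
      exfalso
      have hb := hp1 b (by simp)
      simp only [gmap] at heq
      split_ifs at heq with h1 h2 h2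
      · injection heq with e1 heq2
        injection heq2 with e2 heq3
        omega
      · injection heq with e1 heq2
        injection heq2 with e2 heq3
        omega
      · injection heq with e1 heq2
        injection heq2 with e2 heq3
        exact absurd heq3 (by simp)
      · injection heq with e1 heq2
        injection heq2 with e2 heq3
        injection heq3 with e3 heq4
        exact absurd heq4 (by simp)
    | a :: b :: r, a' :: b' :: r' =>
      have ha := hp1 a (by simp)
      have hb := hp1 b (by simp)
      have ha' := hp2 a' (by simp)
      have hb' := hp2 b' (by simp)
      simp only [gmap] at heq
      split_ifs at heq with h1 h2 h2
      · injection heq with e1 heq2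
        injection heq2 with e2 heq3
        rw [heq3]
        have ea : a = a' := by omega
        have eb : b = b' := by omega
        rw [ea, eb]
      · injection heq with e1 heq2
        injection heq2 with e2 heq3
        exact absurd e2 (by omega)
      · injection heq with e1 heq2
        injection heq2 with e2 heq3
        exact absurd e2 (by omega)
      · injection heq with e1 heq2
        injection heq2 with e2 heq3
        injection heq3 with e3 heq4
        injection heq4 with e4 heq5
        rw [heq5]
        have ea : a = a' := by omega
        rw [ea, e4]
  rw [key, Set.ncard_union_eq hdisj ((ArSet_finite t (n-1)).image _)
      ((ArSet_finite t (n-(t+1))).image _),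
    Set.ncard_image_of_injOn hinj1, Set.ncard_image_of_injOn hinj2]

theorem arndt_1_t (t : ℕ) (ht : 0 < t) :
    (∀ n : ℕ, arndtCount 1 t n = compCount {x : ℕ | x % (t + 1) = 1} n) ∧
    (∀ n : ℕ, t + 1 < n →
      arndtCount 1 t n = arndtCount 1 t (n - 1) + arndtCount 1 t (n - (t + 1))) := by
  have hrecA : ∀ n : ℕ, t + 1 < n →
      arndtCount 1 t n = arndtCount 1 t (n - 1) + arndtCount 1 t (n - (t + 1)) := by
    intro n hn
    rw [arndtCount_eq_ncard, arndtCount_eq_ncard, arndtCount_eq_ncard, ArSet_rec ht hn]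
  refine ⟨?_, hrecA⟩
  intro n
  induction n using Nat.strong_induction_on with
  | _ n ih =>
    rcases le_or_gt n (t+1) with h | h
    · rcases Nat.eq_zero_or_pos n with rfl | hpos
      · rw [arndtCount_eq_ncard, compCount_eq_ncard, ArSet_zero, BSet_zero]
      · rw [arndtCount_eq_ncard, compCount_eq_ncard, ArSet_small ht hpos h, BSet_small ht h,
          Set.ncard_singleton, Set.ncard_singleton]
    · rw [hrecA n h, ih (n-1) (by omega), ih (n-(t+1)) (by omega),
        compCount_eq_ncard, compCount_eq_ncard, compCount_eq_ncard, BSet_rec ht h]
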